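/- Let q = 2 and F(x,y) = y² + y + x³ + x + 1 (i.e. a₁ = a₂ = 0 and a₃ = a₄ = a₆ = 1 over F_2). Then every α ∈ O_∞ is (−2)-approximable: there exists a sequence f_n/g_n with f_n, g_n ∈ A, g_n ≠ 0, f_nA + g_nA = A, |α − f_n/g_n| < 4/|g_n|² for all n, and f_n/g_n → α in K_∞. (Sharp bound of the specific elliptic-curve computation in Example 8.7 of the paper.) -/

import Mathlib

open Filter Polynomial MeasureTheory
open scoped Multiplicative

local notation "ℤₘ₀" => WithZero (Multiplicative ℤ)

/-- The real absolute value attached to a `ℤₘ₀`-valued valuation with base `q`: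
`Multiplicative.ofAdd n ↦ q ^ n` and `0 ↦ 0`. -/
noncomputable def zabs (q : ℕ) (x : ℤₘ₀) : ℝ :=
  if hx : x = 0 then 0 else (q : ℝ) ^ Multiplicative.toAdd (WithZero.unzero hx)

namespace NTA

def ww (k : ℤ) : ℤₘ₀ := ((Multiplicative.ofAdd k : Multiplicative ℤ) : ℤₘ₀)

lemma ww_ne_zero (k : ℤ) : ww k ≠ 0 := WithZero.coe_ne_zero

lemma ww_mul (i j : ℤ) : ww (i + j) = ww i * ww j := by
  simp [ww, ← WithZero.coe_mul, ← ofAdd_add]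

lemma ww_le {i j : ℤ} : ww i ≤ ww j ↔ i ≤ j := by
  simp [ww, WithZero.coe_le_coe]

lemma ww_lt {i j : ℤ} : ww i < ww j ↔ i < j := by
  simp [ww, WithZero.coe_lt_coe]

lemma ww_zero : ww 0 = 1 := rfl

lemma ww_inj {i j : ℤ} (h : ww i = ww j) : i = j := by
  simpa [ww, WithZero.coe_inj] using h

lemma eq_ww_of_ne_zero {u : ℤₘ₀} (hu : u ≠ 0) : ∃ k : ℤ, u = ww k := by
  obtain ⟨m, rfl⟩ := WithZero.ne_zero_iff_exists.mp hu
  exact ⟨Multiplicative.toAdd m, by simp [ww]⟩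

lemma le_ww_of_lt_ww {u : ℤₘ₀} {j : ℤ} (h : u < ww (j + 1)) : u ≤ ww j := by
  rcases eq_or_ne u 0 with rfl | hu
  · exact zero_le'
  · obtain ⟨k, rfl⟩ := eq_ww_of_ne_zero hu
    rw [ww_lt] at h; rw [ww_le]; omega

lemma zabs_ww (k : ℤ) : zabs 2 (ww k) = 2 ^ k := by
  rw [zabs, dif_neg (ww_ne_zero k)]
  norm_num [ww]

lemma zabs_zero : zabs 2 0 = 0 := by simp [zabs]

lemma zabs_nonneg (u : ℤₘ₀) : 0 ≤ zabs 2 u := by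
  rcases eq_or_ne u 0 with rfl | hu
  · simp [zabs]
  · obtain ⟨k, rfl⟩ := eq_ww_of_ne_zero hu
    rw [zabs_ww]; positivity

lemma zabs_mono {u w : ℤₘ₀} (h : u ≤ w) : zabs 2 u ≤ zabs 2 w := by
  rcases eq_or_ne u 0 with rfl | hu
  · simp [zabs_zero, zabs_nonneg]
  · obtain ⟨k, rfl⟩ := eq_ww_of_ne_zero hu
    obtain ⟨j, rfl⟩ := eq_ww_of_ne_zero (fun h0 => hu (le_antisymm (h0 ▸ h) zero_le'))
    rw [zabs_ww, zabs_ww]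
    exact zpow_le_zpow_right₀ one_lt_two.le (ww_le.mp h)

lemma zabs_lt_of_lt_ww {u : ℤₘ₀} {j : ℤ} (h : u < ww j) : zabs 2 u < 2 ^ j := by
  rcases eq_or_ne u 0 with rfl | hu
  · rw [zabs_zero]; positivity
  · obtain ⟨k, rfl⟩ := eq_ww_of_ne_zero hu
    rw [zabs_ww]
    exact zpow_lt_zpow_right₀ one_lt_two (ww_lt.mp h)

lemma zabs_le_one_iff {u : ℤₘ₀} : zabs 2 u ≤ 1 ↔ u ≤ 1 := by
  rcases eq_or_ne u 0 with rfl | hu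
  · simp [zabs_zero]
  · obtain ⟨k, rfl⟩ := eq_ww_of_ne_zero hu
    rw [zabs_ww, show (1 : ℤₘ₀) = ww 0 from rfl, ww_le]
    rw [show (1:ℝ) = 2 ^ (0:ℤ) by norm_num]
    constructor
    · intro h; by_contra hk
      exact absurd h (not_le.mpr (zpow_lt_zpow_right₀ one_lt_two (by omega)))
    · intro h; exact zpow_le_zpow_right₀ one_lt_two.le h

lemma ww_pow (k : ℤ) (n : ℕ) : ww k ^ n = ww (n * k) := by
  rw [ww, ww, ← WithZero.coe_pow, WithZero.coe_inj, ← ofAdd_nsmul, nsmul_eq_mul]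
lemma ww_div (i j : ℤ) : ww i / ww j = ww (i - j) := by
  rw [ww, ww, ww, ← WithZero.coe_div, WithZero.coe_inj, ← ofAdd_sub]
end NTA

/-- The elliptic curve `y² + y = x³ + x + 1` over `F₂`. -/
def W2 : WeierstrassCurve (ZMod 2) := ⟨0, 0, 1, 1, 1⟩

namespace NTA

noncomputable abbrev Aco : Type := W2.toAffine.CoordinateRing
noncomputable abbrev K2 : Type := W2.toAffine.FunctionField

noncomputable def of' (p : (ZMod 2)[X]) : Aco := WeierstrassCurve.Affine.CoordinateRing.mk W2.toAffine (C p)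

noncomputable def XA : Aco := of' X
noncomputable def YA : Aco := WeierstrassCurve.Affine.CoordinateRing.mk W2.toAffine X

lemma of'_eq_algebraMap (p : (ZMod 2)[X]) : of' p = algebraMap (ZMod 2)[X] Aco p := by
  rw [AdjoinRoot.algebraMap_eq]; rfl

lemma of'_smul_one (p : (ZMod 2)[X]) : of' p = p • (1 : Aco) := by
  rw [WeierstrassCurve.Affine.CoordinateRing.smul, mul_one]; rfl

lemma algebraMap_const (c : ZMod 2) : algebraMap (ZMod 2) Aco c = of' (C c) := by
  rw [of'_eq_algebraMap, IsScalarTower.algebraMap_apply (ZMod 2) ((ZMod 2)[X]) Aco, Polynomial.algebraMap_eq]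

lemma wrep (p q : (ZMod 2)[X]) : of' p + of' q * YA = p • (1:Aco) + q • YA := by
  rw [of'_smul_one, of'_smul_one]; rw [smul_mul_assoc, one_mul]

lemma wrep_eq_zero {p q : (ZMod 2)[X]} (h : of' p + of' q * YA = 0) : p = 0 ∧ q = 0 := by
  rw [wrep] at h
  exact WeierstrassCurve.Affine.CoordinateRing.smul_basis_eq_zero h

lemma wrep_exists (a : Aco) : ∃ p q, a = of' p + of' q * YA := by
  obtain ⟨p, q, h⟩ := WeierstrassCurve.Affine.CoordinateRing.exists_smul_basis_eq a
  exact ⟨p, q, by rw [wrep]; exact h.symm⟩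

lemma two_eq_zero : (1 + 1 : Aco) = 0 := by
  have : ((2:ℕ) : Aco) = algebraMap (ZMod 2) Aco ((2:ℕ) : ZMod 2) := (map_natCast _ 2).symm
  have h2 : ((2:ℕ) : ZMod 2) = 0 := by decide
  rw [h2, map_zero] at this
  calc (1+1:Aco) = ((2:ℕ):Aco) := by norm_num
  _ = 0 := this

lemma relation : YA ^ 2 + YA = XA ^ 3 + XA + 1 := by
  have h := AdjoinRoot.mk_self (f := W2.toAffine.polynomial)
  have hpoly : W2.toAffine.polynomial =
      X ^ 2 + C (C (0:ZMod 2) * X + C 1) * X - C (X ^ 3 + C 0 * X ^ 2 + C 1 * X + C 1) := rfl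
  rw [hpoly] at h
  simp only [map_sub, map_add, map_mul, map_pow, map_zero, map_one, C_0, C_1, zero_mul, zero_add,
    one_mul, map_X] at h
  have h' : YA ^ 2 + YA - (XA ^ 3 + XA + 1) = 0 := by
    have : (WeierstrassCurve.Affine.CoordinateRing.mk W2.toAffine) (C (X ^ 3 + X + 1)) =
        XA ^ 3 + XA + 1 := by
      simp only [C_add, C_pow, map_add, map_pow, map_one, C_1]; rfl
    rw [← this, YA, ← map_pow, ← map_add, ← map_sub, C_add, C_add, C_pow, C_1]
    rw [add_zero] at h
    exact h
  have := sub_eq_zero.mp h'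
  linear_combination this

end NTA

namespace NTA2
open NTA

lemma zmod2_cases : ∀ c : ZMod 2, c = 0 ∨ c = 1 := by decide

noncomputable def ι : Aco →+* K2 := algebraMap Aco K2

lemma ι_inj : Function.Injective ι := IsFractionRing.injective Aco K2

section Val
variable (ν : Valuation K2 ℤₘ₀)

noncomputable def t (a : Aco) : ℤₘ₀ := ν (ι a)

lemma t_zero : t ν 0 = 0 := by simp [t, ι]
lemma t_one : t ν 1 = 1 := by simp [t, ι]

lemma t_eq_zero_iff {a : Aco} : t ν a = 0 ↔ a = 0 := by
  rw [t, Valuation.zero_iff, map_eq_zero_iff ι ι_inj]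

lemma t_mul (a b : Aco) : t ν (a * b) = t ν a * t ν b := by simp [t, map_mul]

variable (hneg : ∀ a : Aco, (∀ c : ZMod 2, a ≠ algebraMap (ZMod 2) Aco c) →
    1 < ν (algebraMap Aco K2 a))

include hneg in
lemma t_gt_one {a : Aco} (h0 : a ≠ 0) (h1 : a ≠ 1) : 1 < t ν a := by
  refine hneg a fun c => ?_
  rcases zmod2_cases c with rfl | rfl
  · rwa [map_zero]
  · rwa [map_one]

include hneg in
lemma t_ge_one {a : Aco} (h0 : a ≠ 0) : 1 ≤ t ν a := by
  rcases eq_or_ne a 1 with rfl | h1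
  · rw [t_one]
  · exact (t_gt_one ν hneg h0 h1).le

lemma XA_ne_zero : XA ≠ 0 := by
  intro h
  have : of' X + of' 0 * YA = 0 := by simpa [XA, of'_eq_algebraMap] using h
  simpa using (wrep_eq_zero this).1

lemma XA_ne_one : XA ≠ 1 := by
  intro h
  have : of' (X - 1) + of' 0 * YA = 0 := by
    simp only [of'_eq_algebraMap, map_sub, map_zero, map_one, zero_mul, add_zero]
    rw [← of'_eq_algebraMap, ← h, XA, of'_eq_algebraMap]; ring
  have := (wrep_eq_zero this).1
  exact X_ne_C (1 : ZMod 2) (by rw [← sub_eq_zero, C_1]; exact this)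

lemma YA_ne_zero : YA ≠ 0 := by
  intro h
  have : of' 0 + of' 1 * YA = 0 := by simp [of'_eq_algebraMap, h]
  simpa using (wrep_eq_zero this).2

lemma YA_ne_one : YA ≠ 1 := by
  intro h
  have : of' (-1) + of' 1 * YA = 0 := by
    simp [of'_eq_algebraMap, h]
  simpa using (wrep_eq_zero this).1

end Val
end NTA2

namespace NTA2
open NTA

section Val2
variable (ν : Valuation K2 ℤₘ₀)
variable (hneg : ∀ a : Aco, (∀ c : ZMod 2, a ≠ algebraMap (ZMod 2) Aco c) →
    1 < ν (algebraMap Aco K2 a))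
variable (hsurj : Function.Surjective ν)

include hneg in
lemma exists_kXY : ∃ kX kY : ℤ, 1 ≤ kX ∧ 1 ≤ kY ∧ t ν XA = ww kX ∧ t ν YA = ww kY ∧
    2 * kY = 3 * kX := by
  have hX := t_gt_one ν hneg XA_ne_zero XA_ne_one
  have hY := t_gt_one ν hneg YA_ne_zero YA_ne_one
  obtain ⟨kX, hkX⟩ := eq_ww_of_ne_zero (fun h => XA_ne_zero ((t_eq_zero_iff ν).mp h))
  obtain ⟨kY, hkY⟩ := eq_ww_of_ne_zero (fun h => YA_ne_zero ((t_eq_zero_iff ν).mp h))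
  rw [hkX, show (1:ℤₘ₀) = ww 0 from rfl, ww_lt] at hX
  rw [hkY, show (1:ℤₘ₀) = ww 0 from rfl, ww_lt] at hY
  refine ⟨kX, kY, by omega, by omega, hkX, hkY, ?_⟩
  have e1 : ν (ι (YA ^ 2 + YA)) = ww (2 * kY) := by
    have h2 : ν (ι YA ^ 2) = ww (2 * kY) := by
      rw [map_pow, show ν (ι YA) = ww kY from hkY, ww_pow]; exact congrArg ww (by push_cast; ring)
    have hι : ι (YA ^ 2 + YA) = ι YA ^ 2 + ι YA := by
      rw [RingHom.map_add, RingHom.map_pow]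
    rw [hι, Valuation.map_add_eq_of_lt_left]
    · exact h2
    · rw [h2, show ν (ι YA) = ww kY from hkY, ww_lt]; omega
  have e2 : ν (ι (XA ^ 3 + XA + 1)) = ww (3 * kX) := by
    have h3 : ν (ι XA ^ 3) = ww (3 * kX) := by
      rw [map_pow, show ν (ι XA) = ww kX from hkX, ww_pow]; exact congrArg ww (by push_cast; ring)
    have hin : ν (ι XA + 1) = ww kX := by
      rw [Valuation.map_add_eq_of_lt_left]
      · exact hkX
      · rw [map_one, show ν (ι XA) = ww kX from hkX, show (1:ℤₘ₀) = ww 0 from rfl, ww_lt]; omega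
    have hι : ι (XA ^ 3 + XA + 1) = ι XA ^ 3 + (ι XA + 1) := by
      rw [RingHom.map_add, RingHom.map_add, RingHom.map_pow, RingHom.map_one, add_assoc]
    rw [hι, Valuation.map_add_eq_of_lt_left]
    · exact h3
    · rw [h3, hin, ww_lt]; omega
  rw [relation] at e1
  exact ww_inj (e1.symm.trans e2)

lemma t_of'_pow (d : ℕ) : t ν (of' (X ^ d)) = (t ν XA) ^ d := by
  have h1 : of' (X ^ d) = XA ^ d := by
    unfold XA; rw [of'_eq_algebraMap, of'_eq_algebraMap, map_pow]
  rw [h1]; unfold t; rw [RingHom.map_pow, map_pow]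

lemma t_of' {kX : ℤ} (hkX : t ν XA = ww kX) (hk1 : 1 ≤ kX) :
    ∀ p : (ZMod 2)[X], p ≠ 0 → t ν (of' p) = ww (kX * p.natDegree) := by
  suffices H : ∀ d : ℕ, ∀ p : (ZMod 2)[X], p ≠ 0 → p.natDegree ≤ d →
      t ν (of' p) = ww (kX * p.natDegree) by
    exact fun p hp => H p.natDegree p hp le_rfl
  intro d
  induction d with
  | zero =>
    intro p hp hd
    have h0 : p.natDegree = 0 := Nat.le_zero.mp hd
    have hpc : p = C (p.coeff 0) := Polynomial.eq_C_of_natDegree_eq_zero h0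
    have hc : p.coeff 0 = 1 := by
      rcases zmod2_cases (p.coeff 0) with h | h
      · exact absurd (by rw [hpc, h, C_0]) hp
      · exact h
    have h1 : t ν (of' p) = 1 := by
      rw [hpc, hc, C_1, show of' 1 = 1 by rw [of'_eq_algebraMap, map_one], t_one]
    rw [h1, h0]
    norm_num [ww_zero]
  | succ d IH =>
    intro p hp hd
    rcases Nat.lt_or_ge p.natDegree (d + 1) with hlt | hge
    · exact IH p hp (by omega)
    have hdeg : p.natDegree = d + 1 := le_antisymm hd hge
    have hlc : p.leadingCoeff = 1 := by
      rcases zmod2_cases p.leadingCoeff with h | h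
      · exact absurd (leadingCoeff_eq_zero.mp h) hp
      · exact h
    have hsplit : p.eraseLead + X ^ (d + 1) = p := by
      have := Polynomial.eraseLead_add_C_mul_X_pow p
      rwa [hlc, C_1, one_mul, hdeg] at this
    have hXd : t ν (of' (X ^ (d + 1))) = ww (kX * (d + 1)) := by
      rw [t_of'_pow, hkX, ww_pow]; exact congrArg ww (by push_cast; ring)
    rcases eq_or_ne p.eraseLead 0 with he | he
    · have hp' : p = X ^ (d + 1) := by rw [← hsplit, he, zero_add]
      rw [hdeg, hp', hXd]
      exact congrArg ww (by push_cast; ring)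
    · have hlt' : p.eraseLead.natDegree < p.natDegree := by
        rcases Polynomial.eraseLead_natDegree_lt_or_eraseLead_eq_zero p with h | h
        · exact h
        · exact absurd h he
      have hIH : t ν (of' p.eraseLead) = ww (kX * p.eraseLead.natDegree) :=
        IH p.eraseLead he (by omega)
      have hlt2 : ν (ι (of' p.eraseLead)) < ν (ι (of' (X ^ (d + 1)))) := by
        show t ν _ < t ν _
        rw [hIH, hXd, ww_lt]
        have hcast : (p.eraseLead.natDegree : ℤ) < (d : ℤ) + 1 := by
          exact_mod_cast (by omega : p.eraseLead.natDegree < d + 1)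
        nlinarith
      have hof : of' p = of' p.eraseLead + of' (X ^ (d + 1)) := by
        rw [of'_eq_algebraMap, of'_eq_algebraMap, of'_eq_algebraMap, ← map_add]
        exact congrArg _ hsplit.symm
      have hres : t ν (of' p) = t ν (of' (X ^ (d + 1))) := by
        unfold t; rw [hof, RingHom.map_add]
        exact Valuation.map_add_eq_of_lt_right _ hlt2
      rw [hres, hXd, hdeg]
      exact congrArg ww (by push_cast; ring)
end Val2
end NTA2

namespace NTA2
open NTA

section Val3
variable (ν : Valuation K2 ℤₘ₀)
variable (hneg : ∀ a : Aco, (∀ c : ZMod 2, a ≠ algebraMap (ZMod 2) Aco c) →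
    1 < ν (algebraMap Aco K2 a))
variable (hsurj : Function.Surjective ν)

lemma ι_def : ι = algebraMap Aco K2 := rfl

lemma t_pow (a : Aco) (n : ℕ) : t ν (a ^ n) = (t ν a) ^ n := by
  unfold t; rw [RingHom.map_pow, map_pow]

lemma t_shape {kX kY : ℤ} (hkX : t ν XA = ww kX) (hkY : t ν YA = ww kY) (hk1 : 1 ≤ kX)
    (hrel : 2 * kY = 3 * kX) :
    ∀ a : Aco, a ≠ 0 → ∃ i : ℕ, t ν a = ww (kX * i) ∨ t ν a = ww (kX * i + kY) := by
  intro a ha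
  obtain ⟨p, q, rfl⟩ := wrep_exists a
  by_cases hq : q = 0
  · subst hq
    have hp : p ≠ 0 := by
      intro h; apply ha; rw [h]; simp [of'_eq_algebraMap]
    refine ⟨p.natDegree, Or.inl ?_⟩
    have h0 : of' p + of' 0 * YA = of' p := by simp [of'_eq_algebraMap]
    rw [h0]
    exact t_of' ν hkX hk1 p hp
  by_cases hp : p = 0
  · subst hp
    refine ⟨q.natDegree, Or.inr ?_⟩
    have h0 : of' 0 + of' q * YA = of' q * YA := by simp [of'_eq_algebraMap]
    rw [h0, t_mul, t_of' ν hkX hk1 q hq, hkY, ← ww_mul]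
  · have h1 : t ν (of' p) = ww (kX * p.natDegree) := t_of' ν hkX hk1 p hp
    have h2 : t ν (of' q * YA) = ww (kX * q.natDegree + kY) := by
      rw [t_mul, t_of' ν hkX hk1 q hq, hkY, ← ww_mul]
    have hne : ν (ι (of' p)) ≠ ν (ι (of' q * YA)) := by
      show t ν _ ≠ t ν _
      rw [h1, h2]; intro h
      have h' := ww_inj h
      have h2' : kX * (2 * (p.natDegree : ℤ)) = kX * (2 * (q.natDegree : ℤ) + 3) := by linarith
      have := mul_left_cancel₀ (by omega : kX ≠ 0) h2'
      omega
    have hmax : t ν (of' p + of' q * YA) =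
        max (t ν (of' p)) (t ν (of' q * YA)) := by
      unfold t; rw [RingHom.map_add]
      exact Valuation.map_add_of_distinct_val _ hne
    rcases max_cases (t ν (of' p)) (t ν (of' q * YA)) with ⟨hm, _⟩ | ⟨hm, _⟩
    · exact ⟨p.natDegree, Or.inl (by rw [hmax, hm, h1])⟩
    · exact ⟨q.natDegree, Or.inr (by rw [hmax, hm, h2])⟩

include hneg hsurj in
lemma tXA_tYA : t ν XA = ww 2 ∧ t ν YA = ww 3 := by
  obtain ⟨kX, kY, hk1, hk1', hkX, hkY, hrel⟩ := exists_kXY ν hneg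
  have hkXm : kX = 2 * (kY - kX) := by omega
  have hkYm : kY = 3 * (kY - kX) := by omega
  set m : ℤ := kY - kX with hm
  have hm1 : 1 ≤ m := by omega
  obtain ⟨z, hz⟩ := hsurj (ww 1)
  have hz0 : z ≠ 0 := by
    intro h; rw [h, map_zero] at hz; exact ww_ne_zero 1 hz.symm
  obtain ⟨f, g, hg, hfg⟩ := IsFractionRing.div_surjective (A := Aco) z
  rw [← ι_def] at hfg
  have hgne : g ≠ 0 := nonZeroDivisors.ne_zero hg
  have hfne : f ≠ 0 := by
    intro h; rw [h, map_zero, zero_div] at hfg; exact hz0 hfg.symm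
  have hdvd : ∀ a : Aco, a ≠ 0 → ∃ s : ℤ, t ν a = ww (m * s) := by
    intro a ha
    obtain ⟨i, hi | hi⟩ := t_shape ν hkX hkY hk1 hrel a ha
    · refine ⟨2 * i, by rw [hi, hkXm]; exact congrArg ww (by push_cast; ring)⟩
    · refine ⟨2 * i + 3, by rw [hi, hkXm]; refine congrArg ww ?_; rw [hm] at hkYm ⊢; push_cast; linarith⟩
  obtain ⟨s1, hs1⟩ := hdvd f hfne
  obtain ⟨s2, hs2⟩ := hdvd g hgne
  have hww : ww 1 = ww (m * s1 - m * s2) := by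
    rw [← hz, ← hfg, Valuation.map_div, show ν (ι f) = ww (m*s1) from hs1,
      show ν (ι g) = ww (m*s2) from hs2, ww_div]
  have h1 : m * (s1 - s2) = 1 := by have := ww_inj hww; rw [mul_sub]; omega
  have hmeq : m = 1 := by
    rcases Int.isUnit_iff.mp (IsUnit.of_mul_eq_one _ h1) with h | h
    · exact h
    · omega
  constructor
  · rw [hkX]; exact congrArg ww (by omega)
  · rw [hkY]; exact congrArg ww (by omega)

include hneg hsurj in
lemma t_nat : ∀ a : Aco, a ≠ 0 → ∃ k : ℕ, k ≠ 1 ∧ t ν a = ww k := by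
  obtain ⟨hX2, hY3⟩ := tXA_tYA ν hneg hsurj
  intro a ha
  obtain ⟨i, hi | hi⟩ := t_shape ν hX2 hY3 (by norm_num) (by norm_num) a ha
  · exact ⟨2 * i, by omega, by rw [hi]; exact congrArg ww (by push_cast; ring)⟩
  · exact ⟨2 * i + 3, by omega, by rw [hi]; exact congrArg ww (by push_cast; ring)⟩

include hneg hsurj in
lemma t_real : ∀ k : ℕ, k ≠ 1 → ∃ a : Aco, a ≠ 0 ∧ t ν a = ww k := by
  obtain ⟨hX2, hY3⟩ := tXA_tYA ν hneg hsurj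
  intro k hk
  rcases Nat.even_or_odd k with ⟨i, hi⟩ | ⟨i, hi⟩
  · refine ⟨XA ^ i, pow_ne_zero _ XA_ne_zero, ?_⟩
    rw [t_pow, hX2, ww_pow]
    exact congrArg ww (by push_cast; omega)
  · have hi1 : 1 ≤ i := by omega
    refine ⟨XA ^ (i - 1) * YA, mul_ne_zero (pow_ne_zero _ XA_ne_zero) YA_ne_zero, ?_⟩
    rw [t_mul, t_pow, hX2, ww_pow, hY3, ← ww_mul]
    refine congrArg ww ?_
    have : (((i - 1 : ℕ)) : ℤ) = (i : ℤ) - 1 := by push_cast [hi1]; ring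
    rw [this]; push_cast; omega

end Val3
end NTA2

namespace NTA2
open NTA

section Val4
variable (ν : Valuation K2 ℤₘ₀)
variable (hneg : ∀ a : Aco, (∀ c : ZMod 2, a ≠ algebraMap (ZMod 2) Aco c) →
    1 < ν (algebraMap Aco K2 a))
variable (hsurj : Function.Surjective ν)
variable (hres : Nat.card (IsLocalRing.ResidueField ν.valuationSubring) = 2)

lemma isUnit_val_iff (x : ν.valuationSubring) : IsUnit x ↔ ν (x : K2) = 1 := by
  constructor
  · intro hx
    obtain ⟨y, hy⟩ := hx.exists_right_inv
    have h1 : ν ((x : K2)) * ν ((y : K2)) = 1 := by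
      rw [← map_mul]
      have : ((x * y : ν.valuationSubring) : K2) = (x : K2) * (y : K2) := rfl
      rw [← this, hy]; exact map_one ν
    have hxle : ν (x : K2) ≤ 1 := x.2
    have hyle : ν (y : K2) ≤ 1 := y.2
    refine le_antisymm hxle ?_
    calc (1:ℤₘ₀) = ν (x : K2) * ν (y : K2) := h1.symm
    _ ≤ ν (x : K2) * 1 := mul_le_mul_right hyle _
    _ = ν (x : K2) := mul_one _
  · intro hx1
    have hx0 : (x : K2) ≠ 0 := by
      intro h; rw [h, map_zero] at hx1; exact zero_ne_one hx1
    have hyval : ν ((x : K2)⁻¹) = 1 := by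
      have : ν ((x : K2)) * ν ((x : K2)⁻¹) = 1 := by
        rw [← map_mul, mul_inv_cancel₀ hx0]; exact map_one ν
      rw [hx1, one_mul] at this; exact this
    have hymem : ((x : K2)⁻¹) ∈ ν.valuationSubring := by
      rw [Valuation.mem_valuationSubring_iff, hyval]
    refine IsUnit.of_mul_eq_one (a := x) ⟨_, hymem⟩ ?_
    exact Subtype.ext (mul_inv_cancel₀ hx0)

include hres in
set_option synthInstance.maxHeartbeats 1000000 in
lemma rt {z w : K2} (hz : z ≠ 0) (h : ν z = ν w) : ν (z - w) < ν z := by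
  have hνz : ν z ≠ 0 := ν.ne_zero_iff.mpr hz
  have hw : w ≠ 0 := by
    intro h0; rw [h0, map_zero] at h; exact hνz h
  have hνw : ν w ≠ 0 := ν.ne_zero_iff.mpr hw
  set u := z / w with hu_def
  have hu : ν u = 1 := by
    rw [hu_def, Valuation.map_div, h, div_self hνw]
  have humem : u ∈ ν.valuationSubring := by
    rw [Valuation.mem_valuationSubring_iff, hu]
  have hunit : IsUnit (⟨u, humem⟩ : ν.valuationSubring) := (isUnit_val_iff ν _).mpr hu
  obtain ⟨r, s, hrs, huniv⟩ := Nat.card_eq_two_iff.mp hres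
  have hmemrs : ∀ x : IsLocalRing.ResidueField ν.valuationSubring, x = r ∨ x = s := by
    intro x
    have : x ∈ ({r, s} : Set _) := by rw [huniv]; trivial
    simpa using this
  have hnontriv : Nontrivial (IsLocalRing.ResidueField ν.valuationSubring) := ⟨r, s, hrs⟩
  have key : ∀ x y : IsLocalRing.ResidueField ν.valuationSubring, x ≠ 0 → y ≠ 0 → x = y := by
    intro x y hx hy
    rcases hmemrs x with hx' | hx' <;> rcases hmemrs y with hy' | hy' <;>
      rcases hmemrs 0 with h0 | h0 <;> subst hx' <;> subst hy' <;>
      first | rfl | (exfalso; (first | exact hx h0.symm | exact hy h0.symm))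
  have hres1 : IsLocalRing.residue _ (⟨u, humem⟩ : ν.valuationSubring) =
      IsLocalRing.residue _ (1 : ν.valuationSubring) := by
    apply key
    · exact ((IsLocalRing.residue _).isUnit_map hunit).ne_zero
    · rw [map_one]; exact one_ne_zero
  have hmm : (⟨u, humem⟩ - 1 : ν.valuationSubring) ∈ IsLocalRing.maximalIdeal _ := by
    rw [← IsLocalRing.residue_eq_zero_iff, map_sub, hres1, sub_self]
  have hlt1 : ν (u - 1) < 1 := by
    have hnu : ¬ IsUnit (⟨u, humem⟩ - 1 : ν.valuationSubring) :=
      (IsLocalRing.mem_maximalIdeal _).mp hmm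
    have hcoe : ((⟨u, humem⟩ - 1 : ν.valuationSubring) : K2) = u - 1 := rfl
    have hle : ν (u - 1) ≤ 1 := by rw [← hcoe]; exact (⟨u, humem⟩ - 1 : ν.valuationSubring).2
    rcases lt_or_eq_of_le hle with hlt | heq
    · exact hlt
    · exfalso
      apply hnu
      rw [isUnit_val_iff, hcoe]
      exact heq
  have hzw : z - w = w * (u - 1) := by
    rw [hu_def]; field_simp
  rw [hzw, map_mul, h]
  calc ν w * ν (u - 1) < ν w * 1 :=
    mul_lt_mul_of_pos_left hlt1 (zero_lt_iff.mpr hνw)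
  _ = ν w := mul_one _

include hneg hsurj hres in
lemma span_pair_principal (f g : Aco) (hg : g ≠ 0) :
    ∃ b : Aco, Ideal.span {f, g} = Ideal.span {b} := by
  classical
  set I := Ideal.span ({f, g} : Set Aco) with hI
  have hgI : g ∈ I := Ideal.subset_span (Set.mem_insert_of_mem _ rfl)
  have rtA : ∀ c₁ c₂ : Aco, c₁ ≠ 0 → t ν c₁ = t ν c₂ → t ν (c₁ - c₂) < t ν c₁ := by
    intro c₁ c₂ h1 h2
    have : ι (c₁ - c₂) = ι c₁ - ι c₂ := map_sub ι _ _
    unfold t; rw [this]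
    exact rt ν hres (fun h => h1 (ι_inj (by rw [h, map_zero]))) h2
  have hSex : ∃ k : ℕ, ∃ c, c ∈ I ∧ c ≠ 0 ∧ t ν c = ww k := by
    obtain ⟨k, _, hk⟩ := t_nat ν hneg hsurj g hg
    exact ⟨k, g, hgI, hg, hk⟩
  set d := Nat.find hSex with hd
  obtain ⟨b, hbI, hb0, htb⟩ := Nat.find_spec hSex
  have hmin : ∀ c ∈ I, c ≠ 0 → ∀ k : ℕ, t ν c = ww k → d ≤ k := by
    intro c hc h0 k hk
    exact Nat.find_min' hSex ⟨c, hc, h0, hk⟩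
  have step_eq : ∀ c ∈ I, c ≠ 0 → t ν c = ww d → c = b := by
    intro c hc h0 hk
    by_contra hne
    have hsub0 : c - b ≠ 0 := sub_ne_zero.mpr hne
    have hlt := rtA c b h0 (by rw [hk, htb])
    obtain ⟨k', _, hk'⟩ := t_nat ν hneg hsurj (c - b) hsub0
    have hge := hmin (c - b) (Ideal.sub_mem _ hc hbI) hsub0 k' hk'
    rw [hk, hk', ww_lt] at hlt
    omega
  have claim : ∀ N : ℕ, ∀ c, c ∈ I → c ≠ 0 → t ν c ≤ ww N →
      (c ∈ Ideal.span ({b} : Set Aco) ∨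
        ∃ a, a ∈ I ∧ t ν a = ww (d + 1) ∧ c - a ∈ Ideal.span ({b} : Set Aco)) := by
    intro N
    induction N using Nat.strong_induction_on with
    | _ N IH =>
      intro c hc h0 hN
      obtain ⟨k, hk1, hk⟩ := t_nat ν hneg hsurj c h0
      have hdk : d ≤ k := hmin c hc h0 k hk
      have hkN : k ≤ N := by rw [hk, ww_le] at hN; exact_mod_cast hN
      rcases eq_or_lt_of_le hdk with heq | hdlt
      · left
        have := step_eq c hc h0 (by rw [hk, ← heq])
        rw [this]; exact Ideal.mem_span_singleton_self b
      rcases eq_or_lt_of_le (by omega : d + 1 ≤ k) with heq1 | hd2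
      · right
        refine ⟨c, hc, ?_, by rw [sub_self]; exact zero_mem _⟩
        rw [hk, ← heq1]
        exact congrArg ww (by push_cast; ring)
      · -- k ≥ d + 2
        obtain ⟨q, hq0, htq⟩ := t_real ν hneg hsurj (k - d) (by omega)
        have htqb : t ν (q * b) = ww k := by
          rw [t_mul, htq, htb, ← ww_mul]
          exact congrArg ww (by push_cast; omega)
        rcases eq_or_ne (c - q * b) 0 with hc' | hc'
        · left
          have : c = q * b := by rw [sub_eq_zero] at hc'; exact hc'
          rw [this]
          exact Ideal.mem_span_singleton'.mpr ⟨q, rfl⟩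
        · have hlt := rtA c (q * b) h0 (by rw [hk, htqb])
          obtain ⟨k', _, hk'⟩ := t_nat ν hneg hsurj (c - q * b) hc'
          have hk'lt : k' < k := by rw [hk, hk', ww_lt] at hlt; exact_mod_cast hlt
          have hc'I : c - q * b ∈ I := Ideal.sub_mem _ hc (Ideal.mul_mem_left _ _ hbI)
          have hres' := IH k' (by omega) (c - q * b) hc'I hc' (le_of_eq hk')
          rcases hres' with h | ⟨a, haI, hta, hsuba⟩
          · left
            have : c = (c - q * b) + q * b := by ring
            rw [this]
            exact Ideal.add_mem _ h (Ideal.mem_span_singleton'.mpr ⟨q, rfl⟩)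
          · right
            refine ⟨a, haI, hta, ?_⟩
            have : c - a = (c - q * b - a) + q * b := by ring
            rw [this]
            exact Ideal.add_mem _ hsuba (Ideal.mem_span_singleton'.mpr ⟨q, rfl⟩)
  have stuck_unique : ∀ a, a ∈ I → t ν a = ww (d + 1) →
      ∀ a', a' ∈ I → t ν a' = ww (d + 1) → a - a' ∈ Ideal.span ({b} : Set Aco) := by
    intro a haI hta a' haI' hta'
    rcases eq_or_ne a a' with rfl | hne
    · rw [sub_self]; exact zero_mem _
    · have ha0 : a ≠ 0 := by
        intro h; rw [h, t_zero] at hta; exact ww_ne_zero _ hta.symm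
      have hsub0 : a - a' ≠ 0 := sub_ne_zero.mpr hne
      have hlt := rtA a a' ha0 (by rw [hta, hta'])
      obtain ⟨k', _, hk'⟩ := t_nat ν hneg hsurj (a - a') hsub0
      have hged := hmin (a - a') (Ideal.sub_mem _ haI haI') hsub0 k' hk'
      have : k' = d := by rw [hta, hk', ww_lt] at hlt; omega
      have heqb := step_eq (a - a') (Ideal.sub_mem _ haI haI') hsub0 (by rw [hk', this])
      rw [heqb]; exact Ideal.mem_span_singleton_self b
  by_cases hstuck : ∃ a, a ∈ I ∧ t ν a = ww (d + 1)
  · exfalso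
    obtain ⟨a₀, ha₀I, hta₀⟩ := hstuck
    have ha₀0 : a₀ ≠ 0 := by
      intro h; rw [h, t_zero] at hta₀; exact ww_ne_zero _ hta₀.symm
    set J := (Ideal.span ({b} : Set Aco)).colon (Ideal.span {a₀}) with hJ
    have hJmem : ∀ r : Aco, r ∈ J ↔ r * a₀ ∈ Ideal.span ({b} : Set Aco) := by
      intro r
      rw [hJ, show Ideal.span ({a₀} : Set Aco) = Submodule.span Aco {a₀} from rfl,
        Submodule.mem_colon_span_singleton, smul_eq_mul]
    have h1J : ∀ r : Aco, r ∈ J ∨ r - 1 ∈ J := by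
      intro r
      rcases eq_or_ne (r * a₀) 0 with h0 | h0
      · left; rw [hJmem, h0]; exact zero_mem _
      · obtain ⟨k, _, hk⟩ := t_nat ν hneg hsurj (r * a₀) h0
        have hra : r * a₀ ∈ I := Ideal.mul_mem_left _ _ ha₀I
        rcases claim k (r * a₀) hra h0 (le_of_eq hk) with h | ⟨a, haI, hta, hsuba⟩
        · left; rw [hJmem]; exact h
        · right
          rw [hJmem, sub_mul, one_mul]
          have : r * a₀ - a₀ = (r * a₀ - a) + (a - a₀) := by ring
          rw [this]
          exact Ideal.add_mem _ hsuba (stuck_unique a haI hta a₀ ha₀I hta₀)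
    have h1 : (1 : Aco) ∉ J := by
      rw [hJmem, one_mul]
      intro hmem
      obtain ⟨s, hs⟩ := Ideal.mem_span_singleton'.mp hmem
      have hs0 : s ≠ 0 := by
        rintro rfl; rw [zero_mul] at hs; exact ha₀0 hs.symm
      obtain ⟨ks, hks1, hks⟩ := t_nat ν hneg hsurj s hs0
      have : ww ((d : ℤ) + 1) = ww (ks + d) := by
        rw [← hta₀, ← hs, t_mul, hks, htb, ← ww_mul]
      have := ww_inj this
      omega
    have hquot : ∀ r : Aco, Ideal.Quotient.mk J r = 0 ∨ Ideal.Quotient.mk J r = 1 := by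
      intro r
      rcases h1J r with h | h
      · left; exact Ideal.Quotient.eq_zero_iff_mem.mpr h
      · right
        have h0 := Ideal.Quotient.eq_zero_iff_mem.mpr h
        rw [map_sub, map_one, sub_eq_zero] at h0
        exact h0
    have hQ10 : (1 : Aco ⧸ J) ≠ 0 := by
      intro h
      exact h1 (Ideal.Quotient.eq_zero_iff_mem.mp (by rw [map_one]; exact h))
    have h2Q : (1 : Aco ⧸ J) + 1 = 0 := by
      rw [← map_one (Ideal.Quotient.mk J), ← map_add, two_eq_zero, map_zero]
    have hrelQ : (Ideal.Quotient.mk J YA) ^ 2 + (Ideal.Quotient.mk J YA) =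
        (Ideal.Quotient.mk J XA) ^ 3 + (Ideal.Quotient.mk J XA) + 1 := by
      have := congrArg (Ideal.Quotient.mk J) relation
      simpa only [map_add, map_pow, map_one] using this
    rcases hquot XA with hu | hu <;> rcases hquot YA with hw | hw <;> rw [hu, hw] at hrelQ
    · exact hQ10 (by linear_combination -hrelQ)
    · exact hQ10 (by linear_combination h2Q - hrelQ)
    · exact hQ10 (by linear_combination hrelQ + 2 * h2Q)
    · exact hQ10 (by linear_combination -hrelQ)
  · refine ⟨b, le_antisymm ?_ ?_⟩
    · intro c hc
      rcases eq_or_ne c 0 with rfl | hc0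
      · exact zero_mem _
      · obtain ⟨k, _, hk⟩ := t_nat ν hneg hsurj c hc0
        rcases claim k c hc hc0 (le_of_eq hk) with h | ⟨a, haI, hta, _⟩
        · exact h
        · exact absurd ⟨a, haI, hta⟩ hstuck
    · rw [Ideal.span_le, Set.singleton_subset_iff]
      exact hbI

include hneg hsurj hres in
lemma coprime_rep (f g : Aco) (hg : g ≠ 0) :
    ∃ f' g' : Aco, g' ≠ 0 ∧ Ideal.span {f', g'} = (⊤ : Ideal Aco) ∧
      ι f * ι g' = ι f' * ι g ∧ t ν g' ≤ t ν g := by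
  obtain ⟨b, hb⟩ := span_pair_principal ν hneg hsurj hres f g hg
  have hfI : f ∈ Ideal.span ({b} : Set Aco) := by
    rw [← hb]; exact Ideal.subset_span (Set.mem_insert _ _)
  have hgI : g ∈ Ideal.span ({b} : Set Aco) := by
    rw [← hb]; exact Ideal.subset_span (Set.mem_insert_of_mem _ rfl)
  obtain ⟨f', hf'⟩ := Ideal.mem_span_singleton'.mp hfI
  obtain ⟨g', hg'⟩ := Ideal.mem_span_singleton'.mp hgI
  have hb0 : b ≠ 0 := by
    rintro rfl; rw [mul_zero] at hg'; exact hg hg'.symm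
  have hg'0 : g' ≠ 0 := by
    rintro rfl; rw [zero_mul] at hg'; exact hg hg'.symm
  have hbmem : b ∈ Ideal.span ({f, g} : Set Aco) := by
    rw [hb]; exact Ideal.mem_span_singleton_self b
  obtain ⟨x, y, hxy⟩ := Ideal.mem_span_pair.mp hbmem
  have hone : x * f' + y * g' = 1 := by
    have : b * (x * f' + y * g') = b * 1 := by
      rw [mul_one]
      calc b * (x * f' + y * g') = x * (f' * b) + y * (g' * b) := by ring
      _ = x * f + y * g := by rw [hf', hg']
      _ = b := hxy
    exact mul_left_cancel₀ hb0 this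
  refine ⟨f', g', hg'0, ?_, ?_, ?_⟩
  · rw [Ideal.eq_top_iff_one]
    rw [Ideal.mem_span_pair]
    exact ⟨x, y, hone⟩
  · rw [← hf', ← hg', map_mul, map_mul]
    ring
  · rw [← hg', t_mul]
    calc t ν g' = 1 * t ν g' := (one_mul _).symm
    _ ≤ t ν b * t ν g' := mul_le_mul_left (t_ge_one ν hneg hb0) _
    _ = t ν g' * t ν b := mul_comm _ _
end Val4
end NTA2

namespace NTA2
open NTA

section Val5
variable (ν : Valuation K2 ℤₘ₀)
variable (hneg : ∀ a : Aco, (∀ c : ZMod 2, a ≠ algebraMap (ZMod 2) Aco c) →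
    1 < ν (algebraMap Aco K2 a))
variable (hsurj : Function.Surjective ν)
variable (hres : Nat.card (IsLocalRing.ResidueField ν.valuationSubring) = 2)

include hneg hsurj in
lemma exists_E : ∃ E : ℕ → Aco, ∀ k : ℕ, k ≠ 1 → E k ≠ 0 ∧ t ν (E k) = ww (k : ℤ) := by
  have h : ∀ k : ℕ, ∃ a : Aco, k ≠ 1 → (a ≠ 0 ∧ t ν a = ww (k : ℤ)) := by
    intro k
    by_cases hk : k = 1
    · exact ⟨0, fun h => absurd hk h⟩
    · obtain ⟨a, h1, h2⟩ := t_real ν hneg hsurj k hk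
      exact ⟨a, fun _ => ⟨h1, h2⟩⟩
  choose E hE using h
  exact ⟨E, hE⟩

lemma t_sum_eq {E : ℕ → Aco} (hE : ∀ k : ℕ, k ≠ 1 → E k ≠ 0 ∧ t ν (E k) = ww (k : ℤ)) :
    ∀ F : Finset ℕ, (∀ k ∈ F, k ≠ 1) → ∀ h : F.Nonempty,
      t ν (∑ k ∈ F, E k) = ww ((F.max' h : ℕ) : ℤ) := by
  intro F
  induction F using Finset.induction_on_max with
  | empty => intro _ h; exact absurd rfl h.ne_empty
  | insert a s ha IH =>
    intro hne h
    have has : a ∉ s := fun hmem => lt_irrefl a (ha a hmem)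
    have hane : a ≠ 1 := hne a (Finset.mem_insert_self a s)
    have hEa := hE a hane
    have hmax : (insert a s).max' h = a := by
      apply le_antisymm
      · apply Finset.max'_le; intro y hy
        rcases Finset.mem_insert.mp hy with rfl | hy'
        · exact le_rfl
        · exact (ha y hy').le
      · exact Finset.le_max' _ a (Finset.mem_insert_self a s)
    rw [Finset.sum_insert has, hmax]
    rcases s.eq_empty_or_nonempty with rfl | hs
    · simp only [Finset.sum_empty, add_zero]; exact hEa.2
    · have hsum := IH (fun k hk => hne k (Finset.mem_insert_of_mem hk)) hs
      have hlt : t ν (∑ k ∈ s, E k) < t ν (E a) := by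
        rw [hsum, hEa.2, ww_lt]
        exact_mod_cast ha _ (s.max'_mem hs)
      have hstep : t ν (E a + ∑ k ∈ s, E k) = t ν (E a) := by
        unfold t
        rw [RingHom.map_add]
        exact Valuation.map_add_eq_of_lt_left _ hlt
      rw [hstep, hEa.2]

lemma t_sum_le {E : ℕ → Aco} (hE : ∀ k : ℕ, k ≠ 1 → E k ≠ 0 ∧ t ν (E k) = ww (k : ℤ))
    {F : Finset ℕ} (hF1 : ∀ k ∈ F, k ≠ 1) {N : ℕ} (hFN : ∀ k ∈ F, k ≤ N) :
    t ν (∑ k ∈ F, E k) ≤ ww (N : ℤ) := by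
  rcases F.eq_empty_or_nonempty with rfl | h
  · rw [Finset.sum_empty, t_zero]; exact zero_le'
  · rw [t_sum_eq ν hE F hF1 h, ww_le]
    exact_mod_cast hFN _ (F.max'_mem h)

lemma tau_inj {E : ℕ → Aco} (hE : ∀ k : ℕ, k ≠ 1 → E k ≠ 0 ∧ t ν (E k) = ww (k : ℤ))
    {F F' : Finset ℕ} (hF1 : ∀ k ∈ F, k ≠ 1) (hF1' : ∀ k ∈ F', k ≠ 1)
    (hne : F ≠ F') : ∑ k ∈ F, E k ≠ ∑ k ∈ F', E k := by
  intro heq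
  have h1 : ∑ k ∈ F ∩ F', E k + ∑ k ∈ F \ F', E k = ∑ k ∈ F, E k :=
    Finset.sum_inter_add_sum_sdiff F F' E
  have h2 : ∑ k ∈ F' ∩ F, E k + ∑ k ∈ F' \ F, E k = ∑ k ∈ F', E k :=
    Finset.sum_inter_add_sum_sdiff F' F E
  rw [Finset.inter_comm] at h2
  have hdiff : ∑ k ∈ F \ F', E k = ∑ k ∈ F' \ F, E k :=
    add_left_cancel (h1.trans (heq.trans h2.symm))
  have hd1 : ∀ k ∈ F \ F', k ≠ 1 := fun k hk => hF1 k (Finset.mem_sdiff.mp hk).1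
  have hd2 : ∀ k ∈ F' \ F, k ≠ 1 := fun k hk => hF1' k (Finset.mem_sdiff.mp hk).1
  rcases (F \ F').eq_empty_or_nonempty with he1 | hne1
  · rcases (F' \ F).eq_empty_or_nonempty with he2 | hne2
    · apply hne
      exact Finset.Subset.antisymm (Finset.sdiff_eq_empty_iff_subset.mp he1)
        (Finset.sdiff_eq_empty_iff_subset.mp he2)
    · have : t ν (∑ k ∈ F' \ F, E k) = ww _ := t_sum_eq ν hE _ hd2 hne2
      rw [← hdiff, he1, Finset.sum_empty, t_zero] at this
      exact ww_ne_zero _ this.symm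
  · rcases (F' \ F).eq_empty_or_nonempty with he2 | hne2
    · have : t ν (∑ k ∈ F \ F', E k) = ww _ := t_sum_eq ν hE _ hd1 hne1
      rw [hdiff, he2, Finset.sum_empty, t_zero] at this
      exact ww_ne_zero _ this.symm
    · have e1 := t_sum_eq ν hE _ hd1 hne1
      have e2 := t_sum_eq ν hE _ hd2 hne2
      rw [hdiff, e2] at e1
      have hmaxeq : (F' \ F).max' hne2 = (F \ F').max' hne1 := by exact_mod_cast ww_inj e1
      have hm1 := (F \ F').max'_mem hne1
      have hm2 := (F' \ F).max'_mem hne2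
      rw [hmaxeq] at hm2
      have h3 := Finset.mem_sdiff.mp hm1
      have h4 := Finset.mem_sdiff.mp hm2
      exact h4.2 h3.1

include hres in
lemma RL2 {pi : ℤ → K2} (hπ : ∀ j, ν (pi j) = ww j)
    {E : ℕ → Aco} (hE : ∀ k : ℕ, k ≠ 1 → E k ≠ 0 ∧ t ν (E k) = ww (k : ℤ)) (n : ℕ) :
    ∀ m : ℕ, ∀ z : K2, ν z ≤ ww (1 - n + m) →
      ∃ (fA : Aco) (F : Finset ℤ),
        (∀ j ∈ F, (j = 1 ∨ (2 - (n : ℤ) ≤ j ∧ j ≤ -1)) ∧ j ≤ 1 - (n : ℤ) + m) ∧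
        ν (z - ι fA - ∑ j ∈ F, pi j) ≤ ww (1 - n) := by
  intro m
  induction m with
  | zero =>
    intro z hz
    refine ⟨0, ∅, by simp, ?_⟩
    rw [map_zero, Finset.sum_empty, sub_zero, sub_zero]
    simpa using hz
  | succ m IH =>
    intro z hz
    set k : ℤ := 1 - (n : ℤ) + (m + 1) with hk
    rcases lt_or_eq_of_le hz with hlt | heq
    · have hz' : ν z ≤ ww (1 - n + m) := by
        apply le_ww_of_lt_ww
        rw [show (1 - (n:ℤ) + ↑m) + 1 = 1 - (n:ℤ) + ↑(m + 1) by push_cast; ring]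
        exact hlt
      obtain ⟨fA, F, hF, hν⟩ := IH z hz'
      exact ⟨fA, F, fun j hj => ⟨(hF j hj).1, by have := (hF j hj).2; omega⟩, hν⟩
    · have heqk : ν z = ww k := by
        rw [heq]; exact congrArg ww (by rw [hk]; push_cast; ring)
      have hz0 : z ≠ 0 := by
        intro h0; rw [h0, map_zero] at heqk; exact ww_ne_zero _ heqk.symm
      rcases (by omega : k = 1 ∨ k ≤ -1 ∨ k = 0 ∨ 2 ≤ k) with hk1 | hkneg | hk0 | hk2
      · -- use pi k
        have hred : ν (z - pi k) < ν z := rt ν hres hz0 (by rw [heqk, hπ])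
        have hz' : ν (z - pi k) ≤ ww (1 - n + m) := by
          apply le_ww_of_lt_ww
          rw [show (1 - (n:ℤ) + ↑m) + 1 = k by rw [hk]; ring, ← heqk]
          exact hred
        obtain ⟨fA, F, hF, hν⟩ := IH (z - pi k) hz'
        have hknotin : k ∉ F := by
          intro hmem
          have := (hF k hmem).2
          omega
        refine ⟨fA, insert k F, ?_, ?_⟩
        · intro j hj
          rcases Finset.mem_insert.mp hj with rfl | hj'
          · exact ⟨Or.inl hk1, by omega⟩
          · exact ⟨(hF j hj').1, by have := (hF j hj').2; omega⟩
        · rw [Finset.sum_insert hknotin]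
          have : z - ι fA - (pi k + ∑ j ∈ F, pi j) = z - pi k - ι fA - ∑ j ∈ F, pi j := by ring
          rw [this]
          exact hν
      · -- k ≤ -1, also 2 - n ≤ k
        have hred : ν (z - pi k) < ν z := rt ν hres hz0 (by rw [heqk, hπ])
        have hz' : ν (z - pi k) ≤ ww (1 - n + m) := by
          apply le_ww_of_lt_ww
          rw [show (1 - (n:ℤ) + ↑m) + 1 = k by rw [hk]; ring, ← heqk]
          exact hred
        obtain ⟨fA, F, hF, hν⟩ := IH (z - pi k) hz'
        have hknotin : k ∉ F := by
          intro hmem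
          have := (hF k hmem).2
          omega
        refine ⟨fA, insert k F, ?_, ?_⟩
        · intro j hj
          rcases Finset.mem_insert.mp hj with rfl | hj'
          · refine ⟨Or.inr ⟨by omega, hkneg⟩, by omega⟩
          · exact ⟨(hF j hj').1, by have := (hF j hj').2; omega⟩
        · rw [Finset.sum_insert hknotin]
          have : z - ι fA - (pi k + ∑ j ∈ F, pi j) = z - pi k - ι fA - ∑ j ∈ F, pi j := by ring
          rw [this]
          exact hν
      all_goals {
        -- k = 0 or 2 ≤ k : use E k.toNat
        have hknat : ((k.toNat : ℕ) : ℤ) = k := Int.toNat_of_nonneg (by omega)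
        have hkne1 : k.toNat ≠ 1 := by omega
        obtain ⟨hE0, hEt⟩ := hE k.toNat hkne1
        have hEt' : ν (ι (E k.toNat)) = ww k := by
          show t ν _ = _
          rw [hEt, hknat]
        have hred : ν (z - ι (E k.toNat)) < ν z := rt ν hres hz0 (by rw [heqk, hEt'])
        have hz' : ν (z - ι (E k.toNat)) ≤ ww (1 - n + m) := by
          apply le_ww_of_lt_ww
          rw [show (1 - (n:ℤ) + ↑m) + 1 = k by rw [hk]; ring, ← heqk]
          exact hred
        obtain ⟨fA, F, hF, hν⟩ := IH (z - ι (E k.toNat)) hz'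
        refine ⟨E k.toNat + fA, F, fun j hj => ⟨(hF j hj).1, by have := (hF j hj).2; omega⟩, ?_⟩
        have : z - ι (E k.toNat + fA) - ∑ j ∈ F, pi j =
            z - ι (E k.toNat) - ι fA - ∑ j ∈ F, pi j := by
          rw [RingHom.map_add]; ring
        rw [this]
        exact hν
      }

include hneg hsurj hres in
lemma main_lemma (n : ℕ) (hn : 2 ≤ n) (x : K2) (hx : ν x ≤ 1) :
    ∃ fA gA : Aco, gA ≠ 0 ∧ t ν gA ≤ ww (n : ℤ) ∧
      ν (ι gA * x - ι fA) ≤ ww (1 - n) := by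
  classical
  obtain ⟨E, hE⟩ := exists_E ν hneg hsurj
  choose pi hπ using fun j : ℤ => hsurj (ww j)
  set D : Finset ℕ := insert 0 (Finset.Icc 2 n) with hD
  set JS : Finset ℤ := insert 1 (Finset.Icc (2 - (n : ℤ)) (-1)) with hJS
  have hDmem : ∀ k ∈ D, k ≠ 1 ∧ k ≤ n := by
    intro k hk
    rcases Finset.mem_insert.mp hk with rfl | hk'
    · exact ⟨by omega, by omega⟩
    · have := Finset.mem_Icc.mp hk'
      exact ⟨by omega, this.2⟩
  have key : ∀ F : Finset ℕ, ∃ p : Aco × Finset ℤ, F ⊆ D →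
      (p.2 ⊆ JS ∧ ν (ι (∑ k ∈ F, E k) * x - ι p.1 - ∑ j ∈ p.2, pi j) ≤ ww (1 - n)) := by
    intro F
    by_cases hFD : F ⊆ D
    · have hF1 : ∀ k ∈ F, k ≠ 1 := fun k hk => (hDmem k (hFD hk)).1
      have hFN : ∀ k ∈ F, k ≤ n := fun k hk => (hDmem k (hFD hk)).2
      have hzle : ν (ι (∑ k ∈ F, E k) * x) ≤ ww (1 - (n:ℤ) + (2 * n - 1 : ℕ)) := by
        rw [map_mul]
        have h1 : ν (ι (∑ k ∈ F, E k)) ≤ ww (n : ℤ) := t_sum_le ν hE hF1 hFN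
        have h2 : (1 - (n:ℤ) + ((2 * n - 1 : ℕ) : ℤ)) = n := by
          have : ((2 * n - 1 : ℕ) : ℤ) = 2 * (n : ℤ) - 1 := by push_cast [hn]; omega
          omega
        rw [h2]
        calc ν (ι (∑ k ∈ F, E k)) * ν x ≤ ww (n : ℤ) * 1 := mul_le_mul' h1 hx
        _ = ww (n : ℤ) := mul_one _
      obtain ⟨fA, S, hS, hν⟩ := RL2 ν hres hπ hE n (2 * n - 1) _ hzle
      refine ⟨(fA, S), fun _ => ⟨?_, hν⟩⟩
      intro j hj
      rcases (hS j hj).1 with h | h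
      · rw [hJS, h]; exact Finset.mem_insert_self 1 _
      · rw [hJS]
        exact Finset.mem_insert_of_mem (Finset.mem_Icc.mpr ⟨h.1, h.2⟩)
    · exact ⟨(0, ∅), fun h => absurd h hFD⟩
  choose Φ hΦ using key
  have hDcard : D.card = n := by
    rw [hD, Finset.card_insert_of_notMem (by simp), Nat.card_Icc]
    omega
  have hJScard : JS.card = n - 1 := by
    rw [hJS, Finset.card_insert_of_notMem (by simp), Int.card_Icc]
    omega
  have hmaps : ∀ F ∈ D.powerset, (Φ F).2 ∈ JS.powerset := by
    intro F hF
    exact Finset.mem_powerset.mpr (hΦ F (Finset.mem_powerset.mp hF)).1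
  have hcard : JS.powerset.card < D.powerset.card := by
    rw [Finset.card_powerset, Finset.card_powerset, hDcard, hJScard]
    exact Nat.pow_lt_pow_right (by omega) (by omega)
  obtain ⟨F₁, hF₁, F₂, hF₂, hne, hΦeq⟩ :=
    Finset.exists_ne_map_eq_of_card_lt_of_maps_to hcard hmaps
  have hF₁D := Finset.mem_powerset.mp hF₁
  have hF₂D := Finset.mem_powerset.mp hF₂
  have h1 := (hΦ F₁ hF₁D).2
  have h2 := (hΦ F₂ hF₂D).2
  rw [hΦeq] at h1
  set S := (Φ F₂).2
  set s₁ := ∑ k ∈ F₁, E k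
  set s₂ := ∑ k ∈ F₂, E k
  refine ⟨(Φ F₁).1 - (Φ F₂).1, s₁ - s₂, ?_, ?_, ?_⟩
  · exact sub_ne_zero.mpr (tau_inj ν hE (fun k hk => (hDmem k (hF₁D hk)).1)
      (fun k hk => (hDmem k (hF₂D hk)).1) hne)
  · show t ν (s₁ - s₂) ≤ ww (n : ℤ)
    have hs1 : t ν s₁ ≤ ww (n : ℤ) :=
      t_sum_le ν hE (fun k hk => (hDmem k (hF₁D hk)).1) (fun k hk => (hDmem k (hF₁D hk)).2)
    have hs2 : t ν s₂ ≤ ww (n : ℤ) :=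
      t_sum_le ν hE (fun k hk => (hDmem k (hF₂D hk)).1) (fun k hk => (hDmem k (hF₂D hk)).2)
    have : ι (s₁ - s₂) = ι s₁ - ι s₂ := map_sub ι _ _
    show ν (ι (s₁ - s₂)) ≤ ww (n : ℤ)
    rw [this]
    exact le_trans (ν.map_sub _ _) (max_le hs1 hs2)
  · have hdecomp : ι (s₁ - s₂) * x - ι ((Φ F₁).1 - (Φ F₂).1) =
        (ι s₁ * x - ι (Φ F₁).1 - ∑ j ∈ S, pi j) -
        (ι s₂ * x - ι (Φ F₂).1 - ∑ j ∈ S, pi j) := by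
      rw [map_sub ι s₁ s₂, map_sub ι]
      ring
    rw [hdecomp]
    exact le_trans (ν.map_sub _ _) (max_le h1 h2)

end Val5
end NTA2

open NTA NTA2 in
/-- Example 8.7, explicit curve: for `y² + y = x³ + x + 1` over `F₂`,
every `α ∈ O_∞` is `(-2)`-approximable: `|α - f_n/g_n| < 4/|g_n|²`. -/
theorem neg_two_approximable_explicit_elliptic
    (ν : Valuation W2.toAffine.FunctionField ℤₘ₀)
    (hsurj : Function.Surjective ν)
    (hconst : ∀ c : ZMod 2, c ≠ 0 →
      ν (algebraMap W2.toAffine.CoordinateRing W2.toAffine.FunctionField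
        (algebraMap (ZMod 2) W2.toAffine.CoordinateRing c)) = 1)
    (hneg : ∀ a : W2.toAffine.CoordinateRing, (∀ c : ZMod 2, a ≠ algebraMap (ZMod 2) _ c) →
      1 < ν (algebraMap W2.toAffine.CoordinateRing W2.toAffine.FunctionField a))
    (hres : Nat.card (IsLocalRing.ResidueField ν.valuationSubring) = 2) :
    letI : Valued W2.toAffine.FunctionField ℤₘ₀ := Valued.mk' ν
    letI : Valued (UniformSpace.Completion W2.toAffine.FunctionField) ℤₘ₀ :=
      Valued.valuedCompletion
    ∀ α : UniformSpace.Completion W2.toAffine.FunctionField,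
      zabs 2 (Valued.v α) ≤ 1 →
      ∃ f g : ℕ → W2.toAffine.CoordinateRing,
        (∀ n, g n ≠ 0 ∧
          Ideal.span {f n, g n} = (⊤ : Ideal W2.toAffine.CoordinateRing) ∧
          zabs 2 (Valued.v (α -
            (UniformSpace.Completion.coe' (α := W2.toAffine.FunctionField)
              (algebraMap W2.toAffine.CoordinateRing W2.toAffine.FunctionField (f n) /
                algebraMap W2.toAffine.CoordinateRing W2.toAffine.FunctionField (g n))))) <
            (4 : ℝ) /
              zabs 2 (ν (algebraMap W2.toAffine.CoordinateRing W2.toAffine.FunctionField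
                (g n))) ^ 2) ∧
        Tendsto (fun n => UniformSpace.Completion.coe' (α := W2.toAffine.FunctionField)
            (algebraMap W2.toAffine.CoordinateRing W2.toAffine.FunctionField (f n) /
              algebraMap W2.toAffine.CoordinateRing W2.toAffine.FunctionField (g n)))
          atTop (nhds α) := by
  letI instK : Valued K2 ℤₘ₀ := Valued.mk' ν
  letI instL : Valued (UniformSpace.Completion K2) ℤₘ₀ := Valued.valuedCompletion
  intro α hα
  have hvc : ∀ y : K2, Valued.v (UniformSpace.Completion.coe' (α := K2) y) = ν y := fun y =>
    Valued.valuedCompletion_apply y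
  have hcoesub : ∀ x y : K2, (UniformSpace.Completion.coe' (α := K2) (x - y)) =
      UniformSpace.Completion.coe' (α := K2) x - UniformSpace.Completion.coe' (α := K2) y :=
    fun x y => UniformSpace.Completion.coe_sub x y
  have hα1 : Valued.v α ≤ 1 := zabs_le_one_iff.mp hα
  have key : ∀ nn : ℕ, ∃ fg : Aco × Aco, fg.2 ≠ 0 ∧
      Ideal.span {fg.1, fg.2} = (⊤ : Ideal Aco) ∧
      Valued.v (α - UniformSpace.Completion.coe' (α := K2) (ι fg.1 / ι fg.2)) ≤ ww (-1 - nn) ∧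
      zabs 2 (Valued.v (α - UniformSpace.Completion.coe' (α := K2) (ι fg.1 / ι fg.2))) <
        (4:ℝ) / zabs 2 (ν (ι fg.2)) ^ 2 := by
    intro nn
    set n : ℕ := nn + 2 with hn
    -- find a close rational point x
    have hU : {y : UniformSpace.Completion K2 |
        Valued.v (y - α) < ((Units.mk0 (ww (-3 * (n:ℤ) + 1)) (ww_ne_zero _) : ℤₘ₀ˣ) : ℤₘ₀)}
        ∈ nhds α := by
      obtain ⟨z0, hz0⟩ := hsurj (ww (-3 * (n:ℤ) + 1))
      have hz : Valued.v (UniformSpace.Completion.coe' (α := K2) z0) = ww (-3 * (n:ℤ) + 1) := by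
        rw [hvc, hz0]
      refine Valued.mem_nhds.mpr ⟨Units.mk0 ((Valued.v : Valuation _ ℤₘ₀).restrict
        (UniformSpace.Completion.coe' (α := K2) z0)) ?_, ?_⟩
      · rw [ne_eq, Valuation.restrict_eq_zero_iff, hz]; exact ww_ne_zero _
      · intro y hy
        simp only [Set.mem_setOf_eq, Units.val_mk0, Valuation.restrict_lt_iff, hz] at hy ⊢
        exact hy
    obtain ⟨tset, htsub, htopen, htα⟩ := mem_nhds_iff.mp hU
    obtain ⟨x, hx⟩ := UniformSpace.Completion.denseRange_coe.exists_mem_open htopen ⟨α, htα⟩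
    have hx' : Valued.v (UniformSpace.Completion.coe' (α := K2) x - α) < ww (-3 * (n:ℤ) + 1) := by
      have := htsub hx
      simpa using this
    have hxa : Valued.v (α - UniformSpace.Completion.coe' (α := K2) x) ≤ ww (-3 * (n:ℤ)) := by
      rw [Valuation.map_sub_swap]
      exact le_ww_of_lt_ww hx'
    have hx1 : ν x ≤ 1 := by
      rw [← hvc x]
      have hsp : UniformSpace.Completion.coe' (α := K2) x =
          (UniformSpace.Completion.coe' (α := K2) x - α) + α := (sub_add_cancel _ _).symm
      rw [hsp]
      refine le_trans (Valuation.map_add _ _ _) (max_le ?_ hα1)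
      refine le_trans hx'.le ?_
      rw [show (1:ℤₘ₀) = ww 0 from rfl, ww_le]
      omega
    obtain ⟨fA, gA, hgA0, htgA, hmain⟩ := main_lemma ν hneg hsurj hres n (by omega) x hx1
    obtain ⟨f', g', hg'0, hspan, hcross, htle⟩ := coprime_rep ν hneg hsurj hres fA gA hgA0
    obtain ⟨e, he1, hte⟩ := t_nat ν hneg hsurj gA hgA0
    obtain ⟨e', he'1, hte'⟩ := t_nat ν hneg hsurj g' hg'0
    have hee' : (e' : ℤ) ≤ (e : ℤ) := by
      rw [hte, hte', ww_le] at htle; exact htle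
    have hen : (e : ℤ) ≤ (n : ℤ) := by
      rw [hte, ww_le] at htgA; exact htgA
    have hgA0' : ι gA ≠ 0 := fun h => hgA0 (ι_inj (by rw [h, map_zero]))
    have hg'0' : ι g' ≠ 0 := fun h => hg'0 (ι_inj (by rw [h, map_zero]))
    have hfrac : ι fA / ι gA = ι f' / ι g' := by
      rw [div_eq_div_iff hgA0' hg'0']
      exact hcross
    have hKdiff : ν (x - ι f' / ι g') ≤ ww (1 - n - e) := by
      rw [← hfrac]
      have hre : x - ι fA / ι gA = (ι gA * x - ι fA) / ι gA := by
        field_simp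
      rw [hre, Valuation.map_div, show ν (ι gA) = ww (e:ℤ) from hte]
      calc ν (ι gA * x - ι fA) / ww (e:ℤ) ≤ ww (1 - n) / ww (e:ℤ) := by
            rw [div_eq_mul_inv, div_eq_mul_inv]
            exact mul_le_mul_left hmain _
      _ = ww (1 - n - e) := by rw [ww_div]
    set q : K2 := ι f' / ι g' with hq
    have hqv : Valued.v (α - UniformSpace.Completion.coe' (α := K2) q) ≤
        max (ww (-3 * (n:ℤ))) (ww (1 - n - e)) := by
      have hsp : α - UniformSpace.Completion.coe' (α := K2) q =
          (α - UniformSpace.Completion.coe' (α := K2) x) +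
          (UniformSpace.Completion.coe' (α := K2) x - UniformSpace.Completion.coe' (α := K2) q) :=
        (sub_add_sub_cancel _ _ _).symm
      rw [hsp]
      refine le_trans (Valuation.map_add _ _ _) (max_le_max hxa ?_)
      rw [← hcoesub, hvc]
      exact hKdiff
    have hconv : Valued.v (α - UniformSpace.Completion.coe' (α := K2) q) ≤ ww (-1 - nn) := by
      refine le_trans hqv (max_le ?_ ?_)
      · rw [ww_le]; omega
      · rw [ww_le]; omega
    have hzg : zabs 2 (ν (ι g')) = (2:ℝ) ^ (e' : ℤ) := by
      rw [show ν (ι g') = ww (e':ℤ) from hte', zabs_ww]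
    have hRHS : (4:ℝ) / zabs 2 (ν (ι g')) ^ 2 = (2:ℝ) ^ ((2 : ℤ) - 2 * e') := by
      rw [hzg, sq, ← zpow_add₀ (by norm_num : (2:ℝ) ≠ 0),
        show (4:ℝ) = (2:ℝ) ^ (2:ℤ) by norm_num,
        ← zpow_sub₀ (by norm_num : (2:ℝ) ≠ 0)]
      congr 1
      ring
    have hiv : zabs 2 (Valued.v (α - UniformSpace.Completion.coe' (α := K2) q)) <
        (4:ℝ) / zabs 2 (ν (ι g')) ^ 2 := by
      rw [hRHS]
      refine zabs_lt_of_lt_ww (lt_of_le_of_lt hqv ?_)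
      apply max_lt
      · rw [ww_lt]; omega
      · rw [ww_lt]; omega
    exact ⟨(f', g'), hg'0, hspan, hconv, hiv⟩
  choose FG hFG using key
  refine ⟨fun nn => (FG nn).1, fun nn => (FG nn).2,
    fun nn => ⟨(hFG nn).1, (hFG nn).2.1, (hFG nn).2.2.2⟩, ?_⟩
  rw [Filter.tendsto_atTop']
  intro s hs
  obtain ⟨γ, hγ⟩ := Valued.mem_nhds.mp hs
  obtain ⟨j, hj⟩ := eq_ww_of_ne_zero ((_root_.map_ne_zero MonoidWithZeroHom.ValueGroup₀.embedding).mpr γ.ne_zero)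
  refine ⟨(-j).toNat, fun nn hnn => ?_⟩
  apply hγ
  rw [Set.mem_setOf_eq, Valuation.restrict_lt_iff_lt_embedding]
  rw [Valuation.map_sub_swap, hj]
  refine lt_of_le_of_lt ((hFG nn).2.2.1) ?_
  rw [ww_lt]
  have h1 : (-j : ℤ) ≤ ((-j).toNat : ℤ) := Int.self_le_toNat _
  have h2 : ((-j).toNat : ℤ) ≤ (nn : ℤ) := by exact_mod_cast hnn
  omega


-- #print axioms neg_two_approximable_explicit_elliptic
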